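/- Fix an integer k ≥ 1, a sequence a : ℕ → ℝ and weights w : ℕ → ℝ (indexed from 1) such that a(n) = a(0) · Σ_{h ∈ D_n} f_w(h) for every n ∈ ℕ, where D_n is the set of Dyck-path height functions of length 2n. Then for every n ∈ ℕ, det((a(n+i+j))_{0 ≤ i,j ≤ k−1}) = a(0)^k · Σ_{(P_1,…,P_k) ∈ A_n} ∏_{j=1}^k f_w(P_j). -/

import Mathlib

/-- Dyck-path height functions of length `2N`, encoded as `h : ℕ → ℕ` with
`h 0 = 0`, steps `±1` up to index `2N`, and extended by `0` beyond `2N`. -/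
def DyckN (N : ℕ) : Set (ℕ → ℕ) :=
  {h | h 0 = 0 ∧ (∀ i : ℕ, 2 * N ≤ i → h i = 0) ∧
    ∀ i : ℕ, i < 2 * N → (h (i + 1) = h i + 1 ∨ h i = h (i + 1) + 1)}

/-- The weight `f_w` of a Dyck path of length `2N` with heights `h`: the product
over the steps of `w` evaluated at the larger endpoint height. -/
def fw (w : ℕ → ℝ) (N : ℕ) (h : ℕ → ℕ) : ℝ :=
  ∏ i ∈ Finset.range (2 * N), w (max (h i) (h (i + 1)))

/-- `A_n`: `k`-tuples of pairwise non-intersecting Dyck paths, where the `j`-th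
path (`j : Fin k` zero-indexed) starts at `(-2j, 0)` and has length `2n + 4j`;
its lattice points are `(i - 2j, P j i)` for `0 ≤ i ≤ 2(n + 2j)`. -/
def Aset (k n : ℕ) : Set (Fin k → ℕ → ℕ) :=
  {P | (∀ j : Fin k, P j ∈ DyckN (n + 2 * (j : ℕ))) ∧
    ∀ j j' : Fin k, j ≠ j' → ∀ i i' : ℕ,
      i ≤ 2 * (n + 2 * (j : ℕ)) → i' ≤ 2 * (n + 2 * (j' : ℕ)) →
      (i : ℤ) - 2 * (j : ℕ) = (i' : ℤ) - 2 * (j' : ℕ) → P j i ≠ P j' i'}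

namespace LGV


open Finset Equiv

lemma dyck_le {N : ℕ} {h : ℕ → ℕ} (hh : h ∈ DyckN N) : ∀ i, h i ≤ i := by
  intro i
  induction i with
  | zero => exact le_of_eq hh.1
  | succ i ih =>
    rcases le_or_gt (2 * N) i with hi | hi
    · rw [hh.2.1 (i+1) (by omega)]; omega
    · rcases hh.2.2 i hi with h1 | h1 <;> omega

lemma dyck_parity {N : ℕ} {h : ℕ → ℕ} (hh : h ∈ DyckN N) :
    ∀ i, i ≤ 2 * N → h i % 2 = i % 2 := by
  intro i
  induction i with
  | zero => intro _; simp [hh.1]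
  | succ i ih =>
    intro hi
    rcases hh.2.2 i (by omega) with h1 | h1 <;> (have := ih (by omega); omega)

/-- discrete intermediate value theorem for even-valued sequences with steps of size ≤ 2 -/
lemma ivt (g : ℕ → ℤ) : ∀ (M : ℕ), g 0 ≤ 0 → 0 ≤ g M →
    (∀ m, m < M → g (m+1) ≤ g m + 2 ∧ g m ≤ g (m+1) + 2) →
    (∀ m, m ≤ M → g m % 2 = 0) → ∃ m, m ≤ M ∧ g m = 0 := by
  intro M
  induction M with
  | zero => intro h0 h0' _ _; exact ⟨0, le_refl 0, le_antisymm h0 h0'⟩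
  | succ M ih =>
    intro h0 hM hstep hpar
    rcases le_or_gt 0 (g M) with h | h
    · obtain ⟨m, hm, hm0⟩ := ih h0 h (fun m hm => hstep m (by omega))
        (fun m hm => hpar m (by omega))
      exact ⟨m, by omega, hm0⟩
    · have h1 := hstep M (by omega)
      have h2 := hpar (M+1) (le_refl _)
      exact ⟨M+1, le_refl _, by omega⟩

lemma dyck_finite (N : ℕ) : (DyckN N).Finite := by
  have : DyckN N ⊆ (fun (g : Fin (2*N+1) → Fin (2*N+1)) (i : ℕ) =>
      if hi : i ≤ 2*N then (g ⟨i, by omega⟩ : ℕ) else 0) '' Set.univ := by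
    intro h hh
    refine ⟨fun i => ⟨h i, by have := dyck_le hh i.1; have := i.2; omega⟩, Set.mem_univ _, ?_⟩
    funext i
    by_cases hi : i ≤ 2*N
    · simp [hi]
    · simp [hi, hh.2.1 i (by omega)]
  exact Set.Finite.subset (Set.toFinite _ |>.image _) this

noncomputable def DF (N : ℕ) : Finset (ℕ → ℕ) := (dyck_finite N).toFinset

lemma mem_DF {N : ℕ} {h : ℕ → ℕ} : h ∈ DF N ↔ h ∈ DyckN N := (dyck_finite N).mem_toFinset

end LGV

namespace LGV
open Finset Equiv

variable {k : ℕ}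

/-- half-length of the `j`-th path for permutation `σ` -/
def len (n : ℕ) (σ : Perm (Fin k)) (j : Fin k) : ℕ := n + (j : ℕ) + (σ j : ℕ)

/-- paths `j`, `j'` share the lattice point given by indices `i`, `i'` -/
def R (n : ℕ) (σ : Perm (Fin k)) (P : Fin k → ℕ → ℕ) (j j' : Fin k) (i i' : ℕ) : Prop :=
  i ≤ 2 * len n σ j ∧ i' ≤ 2 * len n σ j' ∧
    (i : ℤ) - 2 * (j : ℕ) = (i' : ℤ) - 2 * (j' : ℕ) ∧ P j i = P j' i'

def Meets (n : ℕ) (σ : Perm (Fin k)) (P : Fin k → ℕ → ℕ) (j j' : Fin k) : Prop :=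
  j ≠ j' ∧ ∃ i i', R n σ P j j' i i'

def Inter (n : ℕ) (σ : Perm (Fin k)) (P : Fin k → ℕ → ℕ) : Prop :=
  ∃ j j', Meets n σ P j j'

lemma R.symm {n σ P} {j j' : Fin k} {i i'} (h : R n σ P j j' i i') : R n σ P j' j i' i :=
  ⟨h.2.1, h.1, h.2.2.1.symm, h.2.2.2.symm⟩

lemma Meets.symm {n σ P} {j j' : Fin k} (h : Meets n σ P j j') : Meets n σ P j' j := by
  obtain ⟨hne, i, i', hr⟩ := h
  exact ⟨hne.symm, i', i, hr.symm⟩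

/-- two paths whose order of sources and sinks is inverted must meet -/
lemma crossing {n : ℕ} {σ : Perm (Fin k)} {P : Fin k → ℕ → ℕ}
    (hP : ∀ j, P j ∈ DyckN (len n σ j)) {j j' : Fin k} (hjj : j < j')
    (hσ : σ j' < σ j) : Meets n σ P j j' := by
  set D : ℕ := 2 * ((j' : ℕ) - (j : ℕ)) with hD
  have hjv : (j : ℕ) < (j' : ℕ) := hjj
  set M : ℕ := 2 * (n + (j : ℕ) + (σ j' : ℕ)) with hM
  have hMj : M ≤ 2 * len n σ j := by simp only [hM, len]; omega
  have hMj' : M + D = 2 * len n σ j' := by simp only [hM, hD, len]; omega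
  let g : ℕ → ℤ := fun m => (P j m : ℤ) - (P j' (m + D) : ℤ)
  have h0 : g 0 ≤ 0 := by
    show (P j 0 : ℤ) - (P j' (0 + D) : ℤ) ≤ 0
    simp [(hP j).1]
  have hMg : 0 ≤ g M := by
    show (0:ℤ) ≤ (P j M : ℤ) - (P j' (M + D) : ℤ)
    have : P j' (M + D) = 0 := (hP j').2.1 _ (by omega)
    simp [this]
  have hstep : ∀ m, m < M → g (m+1) ≤ g m + 2 ∧ g m ≤ g (m+1) + 2 := by
    intro m hm
    show (P j (m+1) : ℤ) - (P j' (m + 1 + D) : ℤ) ≤ (P j m : ℤ) - (P j' (m + D) : ℤ) + 2 ∧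
      (P j m : ℤ) - (P j' (m + D) : ℤ) ≤ (P j (m+1) : ℤ) - (P j' (m + 1 + D) : ℤ) + 2
    have hc : m + 1 + D = m + D + 1 := by omega
    rw [hc]
    have s1 := (hP j).2.2 m (by omega)
    have s2 := (hP j').2.2 (m + D) (by omega)
    push_cast
    omega
  have hpar : ∀ m, m ≤ M → g m % 2 = 0 := by
    intro m hm
    show ((P j m : ℤ) - (P j' (m + D) : ℤ)) % 2 = 0
    have p1 := dyck_parity (hP j) m (by omega)
    have p2 := dyck_parity (hP j') (m + D) (by omega)
    omega
  obtain ⟨m, hm, hm0⟩ := ivt g M h0 hMg hstep hpar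
  have hm0' : (P j m : ℤ) - (P j' (m + D) : ℤ) = 0 := hm0
  refine ⟨ne_of_lt hjj, m, m + D, by omega, by omega, by push_cast; omega, by omega⟩

/-- a non-identity permutation of `Fin k` has an inversion -/
lemma exists_inversion {σ : Perm (Fin k)} (hσ : σ ≠ 1) :
    ∃ j j' : Fin k, j < j' ∧ σ j' < σ j := by
  by_contra hcon
  push_neg at hcon
  have hmono : StrictMono σ := by
    intro x y hxy
    have := hcon x y hxy
    rcases lt_or_eq_of_le this with h | h
    · exact h
    · exact absurd (σ.injective h) (ne_of_lt hxy)
  apply hσ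
  ext j
  haveI : WellFoundedLT (Fin k) := Finite.to_wellFoundedLT
  have h1 : j ≤ σ j := hmono.le_apply
  have h2 : σ j ≤ j := by
    have : σ j ≤ σ⁻¹ (σ j) := by
      have hmono' : StrictMono (σ⁻¹ : Perm (Fin k)) := by
        intro x y hxy
        rcases lt_trichotomy (σ⁻¹ x) (σ⁻¹ y) with h | h | h
        · exact h
        · exact absurd (congrArg σ h) (by simp; exact ne_of_lt hxy)
        · exact absurd (by simpa using hmono h) (not_lt_of_gt hxy)
      exact hmono'.le_apply
    simpa using this
  exact le_antisymm h2 h1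

end LGV

namespace LGV
open Finset Equiv Classical

variable {k : ℕ}

section Involution

variable (n : ℕ) (σ : Perm (Fin k)) (P : Fin k → ℕ → ℕ)

open Classical in
noncomputable def meetersF : Finset (Fin k) :=
  univ.filter (fun j => ∃ j', Meets n σ P j j')

lemma meetersF_nonempty (hI : Inter n σ P) : (meetersF n σ P).Nonempty := by
  obtain ⟨j, j', h⟩ := hI
  exact ⟨j, by simp only [meetersF, mem_filter, mem_univ, true_and]; exact ⟨j', h⟩⟩

noncomputable def J0 (hI : Inter n σ P) : Fin k :=
  (meetersF n σ P).min' (meetersF_nonempty n σ P hI)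

lemma J0_spec (hI : Inter n σ P) : ∃ j', Meets n σ P (J0 n σ P hI) j' := by
  have := (meetersF n σ P).min'_mem (meetersF_nonempty n σ P hI)
  simpa only [J0, meetersF, mem_filter, mem_univ, true_and] using this

lemma J0_min (hI : Inter n σ P) (j : Fin k) (h : ∃ j', Meets n σ P j j') :
    J0 n σ P hI ≤ j :=
  (meetersF n σ P).min'_le j (by simp only [meetersF, mem_filter, mem_univ, true_and]; exact h)

lemma Qt_ex (hI : Inter n σ P) :
    ∃ i, ∃ j', j' ≠ J0 n σ P hI ∧ ∃ i', R n σ P (J0 n σ P hI) j' i i' := by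
  obtain ⟨j', hne, i, i', hr⟩ := J0_spec n σ P hI
  exact ⟨i, j', hne.symm, i', hr⟩

noncomputable def T0 (hI : Inter n σ P) : ℕ := Nat.find (Qt_ex n σ P hI)

lemma T0_spec (hI : Inter n σ P) :
    ∃ j', j' ≠ J0 n σ P hI ∧ ∃ i', R n σ P (J0 n σ P hI) j' (T0 n σ P hI) i' :=
  Nat.find_spec (Qt_ex n σ P hI)

lemma T0_min (hI : Inter n σ P) (i : ℕ) (hi : i < T0 n σ P hI) :
    ¬ ∃ j', j' ≠ J0 n σ P hI ∧ ∃ i', R n σ P (J0 n σ P hI) j' i i' :=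
  Nat.find_min (Qt_ex n σ P hI) hi

open Classical in
noncomputable def candF (hI : Inter n σ P) : Finset (Fin k) :=
  univ.filter (fun j' => j' ≠ J0 n σ P hI ∧ ∃ i', R n σ P (J0 n σ P hI) j' (T0 n σ P hI) i')

lemma candF_nonempty (hI : Inter n σ P) : (candF n σ P hI).Nonempty := by
  obtain ⟨j', h1, h2⟩ := T0_spec n σ P hI
  exact ⟨j', by simp only [candF, mem_filter, mem_univ, true_and]; exact ⟨h1, h2⟩⟩

noncomputable def J1 (hI : Inter n σ P) : Fin k :=
  (candF n σ P hI).min' (candF_nonempty n σ P hI)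

lemma J1_spec (hI : Inter n σ P) :
    J1 n σ P hI ≠ J0 n σ P hI ∧
      ∃ i', R n σ P (J0 n σ P hI) (J1 n σ P hI) (T0 n σ P hI) i' := by
  have := (candF n σ P hI).min'_mem (candF_nonempty n σ P hI)
  simpa only [J1, candF, mem_filter, mem_univ, true_and] using this

lemma J1_min (hI : Inter n σ P) (j' : Fin k) (h1 : j' ≠ J0 n σ P hI)
    (h2 : ∃ i', R n σ P (J0 n σ P hI) j' (T0 n σ P hI) i') : J1 n σ P hI ≤ j' :=
  (candF n σ P hI).min'_le j'
    (by simp only [candF, mem_filter, mem_univ, true_and]; exact ⟨h1, h2⟩)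

lemma J0_lt_J1 (hI : Inter n σ P) : J0 n σ P hI < J1 n σ P hI := by
  rcases lt_trichotomy (J0 n σ P hI) (J1 n σ P hI) with h | h | h
  · exact h
  · exact absurd h.symm (J1_spec n σ P hI).1
  · exfalso
    obtain ⟨hne, i', hr⟩ := J1_spec n σ P hI
    have : ∃ j', Meets n σ P (J1 n σ P hI) j' :=
      ⟨J0 n σ P hI, hne, i', T0 n σ P hI, hr.symm⟩
    exact absurd (J0_min n σ P hI _ this) (not_le_of_gt h)

/-- the horizontal shift between the two swapped paths -/
noncomputable def DD (hI : Inter n σ P) : ℕ :=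
  2 * ((J1 n σ P hI : ℕ) - (J0 n σ P hI : ℕ))

/-- basic numeric facts about the meeting point -/
lemma basics (hI : Inter n σ P) :
    T0 n σ P hI ≤ 2 * len n σ (J0 n σ P hI) ∧
    T0 n σ P hI + DD n σ P hI ≤ 2 * len n σ (J1 n σ P hI) ∧
    P (J0 n σ P hI) (T0 n σ P hI) = P (J1 n σ P hI) (T0 n σ P hI + DD n σ P hI) := by
  obtain ⟨hne, i', hb0, hb1, hx, hv⟩ := J1_spec n σ P hI
  have hlt : (J0 n σ P hI : ℕ) < (J1 n σ P hI : ℕ) := J0_lt_J1 n σ P hI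
  have hi' : i' = T0 n σ P hI + DD n σ P hI := by
    have hD : DD n σ P hI = 2 * ((J1 n σ P hI : ℕ) - (J0 n σ P hI : ℕ)) := rfl
    omega
  exact ⟨hb0, hi' ▸ hb1, hi' ▸ hv⟩

/-- first new path: follow path `J0` to the meeting point, then path `J1` -/
noncomputable def AA (hI : Inter n σ P) : ℕ → ℕ := fun t =>
  if t ≤ T0 n σ P hI then P (J0 n σ P hI) t else P (J1 n σ P hI) (t + DD n σ P hI)

/-- second new path: follow path `J1` to the meeting point, then path `J0` -/
noncomputable def BB (hI : Inter n σ P) : ℕ → ℕ := fun t =>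
  if t ≤ T0 n σ P hI + DD n σ P hI then P (J1 n σ P hI) t
  else P (J0 n σ P hI) (t - DD n σ P hI)

noncomputable def PP (hI : Inter n σ P) : Fin k → ℕ → ℕ :=
  Function.update (Function.update P (J0 n σ P hI) (AA n σ P hI)) (J1 n σ P hI)
    (BB n σ P hI)

noncomputable def SP (hI : Inter n σ P) : Perm (Fin k) :=
  σ * Equiv.swap (J0 n σ P hI) (J1 n σ P hI)

lemma SP_apply_j0 (hI : Inter n σ P) : SP n σ P hI (J0 n σ P hI) = σ (J1 n σ P hI) := by
  simp [SP, Equiv.Perm.mul_apply, Equiv.swap_apply_left]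

lemma SP_apply_j1 (hI : Inter n σ P) : SP n σ P hI (J1 n σ P hI) = σ (J0 n σ P hI) := by
  simp [SP, Equiv.Perm.mul_apply, Equiv.swap_apply_right]

lemma SP_apply_other (hI : Inter n σ P) (j : Fin k) (h0 : j ≠ J0 n σ P hI)
    (h1 : j ≠ J1 n σ P hI) : SP n σ P hI j = σ j := by
  simp [SP, Equiv.Perm.mul_apply, Equiv.swap_apply_of_ne_of_ne h0 h1]

lemma PP_apply_j0 (hI : Inter n σ P) : PP n σ P hI (J0 n σ P hI) = AA n σ P hI := by
  have hne : J0 n σ P hI ≠ J1 n σ P hI := ne_of_lt (J0_lt_J1 n σ P hI)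
  simp [PP, Function.update_apply, hne, hne.symm]

lemma PP_apply_j1 (hI : Inter n σ P) : PP n σ P hI (J1 n σ P hI) = BB n σ P hI := by
  simp [PP, Function.update_apply]

lemma PP_apply_other (hI : Inter n σ P) (j : Fin k) (h0 : j ≠ J0 n σ P hI)
    (h1 : j ≠ J1 n σ P hI) : PP n σ P hI j = P j := by
  simp [PP, Function.update_apply, h0, h1]

end Involution

end LGV

namespace LGV
open Finset Equiv

section Glue

variable {N0 N1 N0' N1' d t0 : ℕ} {p q : ℕ → ℕ}

/-- glued path `A`: follow `p` to the meeting point, then `q` -/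
lemma glue_memA (hp : p ∈ DyckN N0) (hq : q ∈ DyckN N1) (hb0 : t0 ≤ 2*N0)
    (hb1 : t0 + d ≤ 2*N1) (heq : p t0 = q (t0 + d)) (hN : 2*N0' + d = 2*N1) :
    (fun t => if t ≤ t0 then p t else q (t + d)) ∈ DyckN N0' := by
  have ht0' : t0 ≤ 2*N0' := by omega
  refine ⟨?_, ?_, ?_⟩
  · simp [Nat.zero_le, hp.1]
  · intro i hi
    by_cases hc : i ≤ t0
    · have hit : i = t0 := by omega
      simp only [if_pos hc]
      rw [hit, heq]
      exact hq.2.1 _ (by omega)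
    · simp only [if_neg hc]
      exact hq.2.1 _ (by omega)
  · intro i hi
    by_cases hc1 : i + 1 ≤ t0
    · have hc2 : i ≤ t0 := by omega
      simp only [if_pos hc1, if_pos hc2]
      exact hp.2.2 i (by omega)
    · by_cases hc2 : i ≤ t0
      · have hit : i = t0 := by omega
        simp only [if_neg hc1, if_pos hc2]
        rw [hit, heq, show t0 + 1 + d = (t0 + d) + 1 from by omega]
        exact hq.2.2 (t0 + d) (by omega)
      · simp only [if_neg hc1, if_neg hc2]
        rw [show i + 1 + d = (i + d) + 1 from by omega]
        exact hq.2.2 (i + d) (by omega)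

/-- glued path `B`: follow `q` to the meeting point, then `p` -/
lemma glue_memB (hp : p ∈ DyckN N0) (hq : q ∈ DyckN N1) (hb0 : t0 ≤ 2*N0)
    (hb1 : t0 + d ≤ 2*N1) (heq : p t0 = q (t0 + d)) (hN : 2*N1' = 2*N0 + d) :
    (fun t => if t ≤ t0 + d then q t else p (t - d)) ∈ DyckN N1' := by
  refine ⟨?_, ?_, ?_⟩
  · simp [Nat.zero_le, hq.1]
  · intro i hi
    by_cases hc : i ≤ t0 + d
    · have hit : i = t0 + d := by omega
      simp only [if_pos hc]
      rw [hit, ← heq]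
      exact hp.2.1 _ (by omega)
    · simp only [if_neg hc]
      exact hp.2.1 _ (by omega)
  · intro i hi
    by_cases hc1 : i + 1 ≤ t0 + d
    · have hc2 : i ≤ t0 + d := by omega
      simp only [if_pos hc1, if_pos hc2]
      exact hq.2.2 i (by omega)
    · by_cases hc2 : i ≤ t0 + d
      · have hit : i = t0 + d := by omega
        simp only [if_neg hc1, if_pos hc2]
        rw [hit, ← heq, show t0 + d + 1 - d = t0 + 1 from by omega]
        exact hp.2.2 t0 (by omega)
      · simp only [if_neg hc1, if_neg hc2]
        rw [show i + 1 - d = (i - d) + 1 from by omega]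
        exact hp.2.2 (i - d) (by omega)

lemma fw_split (w : ℕ → ℝ) (N : ℕ) (h : ℕ → ℕ) (t : ℕ) (ht : t ≤ 2*N) :
    fw w N h = (∏ i ∈ Finset.range t, w (max (h i) (h (i+1)))) *
      ∏ i ∈ Finset.range (2*N - t), w (max (h (t+i)) (h (t+i+1))) := by
  have h1 := Finset.prod_range_add (fun i => w (max (h i) (h (i+1)))) t (2*N - t)
  rw [show t + (2*N - t) = 2*N from by omega] at h1
  rw [fw, h1]

/-- the glued pair has the same total weight as the original pair -/
lemma glue_fw (w : ℕ → ℝ) (hb0 : t0 ≤ 2*N0) (hb1 : t0 + d ≤ 2*N1)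
    (heq : p t0 = q (t0 + d)) (hNA : 2*N0' + d = 2*N1) (hNB : 2*N1' = 2*N0 + d) :
    fw w N0' (fun t => if t ≤ t0 then p t else q (t + d)) *
      fw w N1' (fun t => if t ≤ t0 + d then q t else p (t - d)) =
    fw w N0 p * fw w N1 q := by
  set A : ℕ → ℕ := fun t => if t ≤ t0 then p t else q (t + d) with hA
  set B : ℕ → ℕ := fun t => if t ≤ t0 + d then q t else p (t - d) with hB
  have hA0 : ∀ i, i ≤ t0 → A i = p i := fun i hi => by simp only [hA, if_pos hi]
  have hB0 : ∀ i, i ≤ t0 + d → B i = q i := fun i hi => by simp only [hB, if_pos hi]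
  have hA1 : ∀ i, A (t0 + i) = q (t0 + d + i) := by
    intro i
    rcases Nat.eq_zero_or_pos i with h | h
    · rw [h]; simpa using (hA0 t0 (le_refl _)).trans heq
    · simp only [hA, if_neg (by omega : ¬ (t0 + i ≤ t0))]
      congr 1; omega
  have hB1 : ∀ i, B (t0 + d + i) = p (t0 + i) := by
    intro i
    rcases Nat.eq_zero_or_pos i with h | h
    · rw [h]; simpa using (hB0 (t0+d) (le_refl _)).trans heq.symm
    · simp only [hB, if_neg (by omega : ¬ (t0 + d + i ≤ t0 + d))]
      congr 1; omega
  have ht0' : t0 ≤ 2*N0' := by omega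
  rw [fw_split w N0' A t0 ht0', fw_split w N1' B (t0+d) (by omega),
    fw_split w N0 p t0 hb0, fw_split w N1 q (t0+d) hb1]
  have e1 : (∏ i ∈ Finset.range t0, w (max (A i) (A (i+1)))) =
      ∏ i ∈ Finset.range t0, w (max (p i) (p (i+1))) := by
    refine Finset.prod_congr rfl fun i hi => ?_
    rw [Finset.mem_range] at hi
    rw [hA0 i (by omega), hA0 (i+1) (by omega)]
  have e2 : (∏ i ∈ Finset.range (2*N0' - t0), w (max (A (t0+i)) (A (t0+i+1)))) =
      ∏ i ∈ Finset.range (2*N1 - (t0+d)), w (max (q (t0+d+i)) (q (t0+d+i+1))) := by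
    rw [show 2*N0' - t0 = 2*N1 - (t0+d) from by omega]
    refine Finset.prod_congr rfl fun i _ => ?_
    have u1 : A (t0+i+1) = q (t0+d+i+1) := by
      have := hA1 (i+1)
      rwa [show t0+(i+1) = t0+i+1 from by omega, show t0+d+(i+1) = t0+d+i+1 from by omega]
        at this
    rw [hA1 i, u1]
  have e3 : (∏ i ∈ Finset.range (t0+d), w (max (B i) (B (i+1)))) =
      ∏ i ∈ Finset.range (t0+d), w (max (q i) (q (i+1))) := by
    refine Finset.prod_congr rfl fun i hi => ?_
    rw [Finset.mem_range] at hi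
    rw [hB0 i (by omega), hB0 (i+1) (by omega)]
  have e4 : (∏ i ∈ Finset.range (2*N1' - (t0+d)), w (max (B (t0+d+i)) (B (t0+d+i+1)))) =
      ∏ i ∈ Finset.range (2*N0 - t0), w (max (p (t0+i)) (p (t0+i+1))) := by
    rw [show 2*N1' - (t0+d) = 2*N0 - t0 from by omega]
    refine Finset.prod_congr rfl fun i _ => ?_
    have u1 : B (t0+d+i+1) = p (t0+i+1) := by
      have := hB1 (i+1)
      rwa [show t0+d+(i+1) = t0+d+i+1 from by omega, show t0+(i+1) = t0+i+1 from by omega]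
        at this
    rw [hB1 i, u1]
  rw [e1, e2, e3, e4]
  ring

/-- every in-range point of `A` is an in-range point of `p` or (shifted) of `q` -/
lemma glue_ptsA (hb0 : t0 ≤ 2*N0) (hb1 : t0 + d ≤ 2*N1) (hN : 2*N0' + d = 2*N1) :
    ∀ i, i ≤ 2*N0' →
      (i ≤ 2*N0 ∧ (fun t => if t ≤ t0 then p t else q (t + d)) i = p i) ∨
      (i + d ≤ 2*N1 ∧ (fun t => if t ≤ t0 then p t else q (t + d)) i = q (i + d)) := by
  intro i hi
  by_cases hc : i ≤ t0
  · exact Or.inl ⟨by omega, by simp only [if_pos hc]⟩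
  · exact Or.inr ⟨by omega, by simp only [if_neg hc]⟩

lemma glue_ptsB (hb0 : t0 ≤ 2*N0) (hb1 : t0 + d ≤ 2*N1) (hN : 2*N1' = 2*N0 + d) :
    ∀ i, i ≤ 2*N1' →
      (i ≤ 2*N1 ∧ (fun t => if t ≤ t0 + d then q t else p (t - d)) i = q i) ∨
      (d ≤ i ∧ i - d ≤ 2*N0 ∧ (fun t => if t ≤ t0 + d then q t else p (t - d)) i = p (i - d)) := by
  intro i hi
  by_cases hc : i ≤ t0 + d
  · exact Or.inl ⟨by omega, by simp only [if_pos hc]⟩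
  · exact Or.inr ⟨by omega, by omega, by simp only [if_neg hc]⟩

end Glue

end LGV

namespace LGV
open Finset Equiv Classical

section Involution2

variable {k : ℕ} (n : ℕ) (σ : Perm (Fin k)) (P : Fin k → ℕ → ℕ)

lemma T0_le (hI : Inter n σ P) (i : ℕ)
    (h : ∃ j', j' ≠ J0 n σ P hI ∧ ∃ i', R n σ P (J0 n σ P hI) j' i i') :
    T0 n σ P hI ≤ i := Nat.find_le h

lemma AA_val_le (hI : Inter n σ P) {t : ℕ} (h : t ≤ T0 n σ P hI) :
    AA n σ P hI t = P (J0 n σ P hI) t := if_pos h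

lemma AA_val_gt (hI : Inter n σ P) {t : ℕ} (h : T0 n σ P hI < t) :
    AA n σ P hI t = P (J1 n σ P hI) (t + DD n σ P hI) := if_neg (by omega)

lemma BB_val_le (hI : Inter n σ P) {t : ℕ} (h : t ≤ T0 n σ P hI + DD n σ P hI) :
    BB n σ P hI t = P (J1 n σ P hI) t := if_pos h

lemma BB_val_gt (hI : Inter n σ P) {t : ℕ} (h : T0 n σ P hI + DD n σ P hI < t) :
    BB n σ P hI t = P (J0 n σ P hI) (t - DD n σ P hI) := if_neg (by omega)

lemma lenS0 (hI : Inter n σ P) :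
    len n (SP n σ P hI) (J0 n σ P hI) = n + (J0 n σ P hI : ℕ) + (σ (J1 n σ P hI) : ℕ) := by
  unfold len; rw [SP_apply_j0]

lemma lenS1 (hI : Inter n σ P) :
    len n (SP n σ P hI) (J1 n σ P hI) = n + (J1 n σ P hI : ℕ) + (σ (J0 n σ P hI) : ℕ) := by
  unfold len; rw [SP_apply_j1]

lemma lenS_other (hI : Inter n σ P) (j : Fin k) (h0 : j ≠ J0 n σ P hI)
    (h1 : j ≠ J1 n σ P hI) : len n (SP n σ P hI) j = len n σ j := by
  unfold len; rw [SP_apply_other n σ P hI j h0 h1]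

/-- the arithmetic relations between old and new half-lengths -/
lemma len_arith (hI : Inter n σ P) :
    2 * len n (SP n σ P hI) (J0 n σ P hI) + DD n σ P hI = 2 * len n σ (J1 n σ P hI) ∧
    2 * len n (SP n σ P hI) (J1 n σ P hI) = 2 * len n σ (J0 n σ P hI) + DD n σ P hI := by
  have hlt : (J0 n σ P hI : ℕ) < (J1 n σ P hI : ℕ) := J0_lt_J1 n σ P hI
  have hdd : DD n σ P hI = 2 * ((J1 n σ P hI : ℕ) - (J0 n σ P hI : ℕ)) := rfl
  have h1 := lenS0 n σ P hI
  have h2 := lenS1 n σ P hI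
  have h3 : len n σ (J0 n σ P hI) = n + (J0 n σ P hI : ℕ) + (σ (J0 n σ P hI) : ℕ) := rfl
  have h4 : len n σ (J1 n σ P hI) = n + (J1 n σ P hI : ℕ) + (σ (J1 n σ P hI) : ℕ) := rfl
  omega

lemma PP_mem (hP : ∀ j, P j ∈ DyckN (len n σ j)) (hI : Inter n σ P) :
    ∀ j, PP n σ P hI j ∈ DyckN (len n (SP n σ P hI) j) := by
  obtain ⟨hb0, hb1, heq⟩ := basics n σ P hI
  obtain ⟨ha1, ha2⟩ := len_arith n σ P hI
  intro j
  by_cases h0 : j = J0 n σ P hI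
  · rw [h0, PP_apply_j0]
    exact glue_memA (hP _) (hP _) hb0 hb1 heq ha1
  · by_cases h1 : j = J1 n σ P hI
    · rw [h1, PP_apply_j1]
      exact glue_memB (hP _) (hP _) hb0 hb1 heq ha2
    · rw [PP_apply_other n σ P hI j h0 h1, lenS_other n σ P hI j h0 h1]
      exact hP j

lemma PP_fw (w : ℕ → ℝ) (hI : Inter n σ P) :
    ∏ j, fw w (len n (SP n σ P hI) j) (PP n σ P hI j) =
      ∏ j, fw w (len n σ j) (P j) := by
  classical
  obtain ⟨hb0, hb1, heq⟩ := basics n σ P hI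
  obtain ⟨ha1, ha2⟩ := len_arith n σ P hI
  have hne : J0 n σ P hI ≠ J1 n σ P hI := ne_of_lt (J0_lt_J1 n σ P hI)
  have hmem1 : J1 n σ P hI ∈ (univ : Finset (Fin k)).erase (J0 n σ P hI) :=
    mem_erase.2 ⟨hne.symm, mem_univ _⟩
  rw [← Finset.mul_prod_erase univ _ (mem_univ (J0 n σ P hI)),
    ← Finset.mul_prod_erase _ _ hmem1,
    ← Finset.mul_prod_erase univ (fun j => fw w (len n σ j) (P j)) (mem_univ (J0 n σ P hI)),
    ← Finset.mul_prod_erase _ (fun j => fw w (len n σ j) (P j)) hmem1]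
  have hrest : ∏ j ∈ (((univ : Finset (Fin k)).erase (J0 n σ P hI)).erase (J1 n σ P hI)),
      fw w (len n (SP n σ P hI) j) (PP n σ P hI j) =
      ∏ j ∈ (((univ : Finset (Fin k)).erase (J0 n σ P hI)).erase (J1 n σ P hI)),
      fw w (len n σ j) (P j) := by
    refine Finset.prod_congr rfl fun j hj => ?_
    rw [mem_erase, mem_erase] at hj
    rw [PP_apply_other n σ P hI j hj.2.1 hj.1, lenS_other n σ P hI j hj.2.1 hj.1]
  rw [hrest, PP_apply_j0, PP_apply_j1, ← mul_assoc, ← mul_assoc]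
  congr 1
  exact glue_fw w hb0 hb1 heq ha1 ha2

/-- the two swapped paths still meet at the same point -/
lemma PP_meets (hI : Inter n σ P) :
    R n (SP n σ P hI) (PP n σ P hI) (J0 n σ P hI) (J1 n σ P hI) (T0 n σ P hI)
      (T0 n σ P hI + DD n σ P hI) := by
  obtain ⟨hb0, hb1, heq⟩ := basics n σ P hI
  obtain ⟨ha1, ha2⟩ := len_arith n σ P hI
  have hlt : (J0 n σ P hI : ℕ) < (J1 n σ P hI : ℕ) := J0_lt_J1 n σ P hI
  have hdd : DD n σ P hI = 2 * ((J1 n σ P hI : ℕ) - (J0 n σ P hI : ℕ)) := rfl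
  refine ⟨by omega, by omega, by push_cast; omega, ?_⟩
  rw [PP_apply_j0, PP_apply_j1, AA_val_le n σ P hI (le_refl _),
    BB_val_le n σ P hI (le_refl _)]
  exact heq

lemma PP_inter (hI : Inter n σ P) : Inter n (SP n σ P hI) (PP n σ P hI) :=
  ⟨_, _, ne_of_lt (J0_lt_J1 n σ P hI), _, _, PP_meets n σ P hI⟩

end Involution2

end LGV

namespace LGV
open Finset Equiv Classical

section Involution3

variable {k : ℕ} (n : ℕ) (σ : Perm (Fin k)) (P : Fin k → ℕ → ℕ)

lemma J0_PP (hP : ∀ j, P j ∈ DyckN (len n σ j)) (hI : Inter n σ P)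
    (hI' : Inter n (SP n σ P hI) (PP n σ P hI)) :
    J0 n (SP n σ P hI) (PP n σ P hI) hI' = J0 n σ P hI := by
  obtain ⟨hb0, hb1, heq⟩ := basics n σ P hI
  obtain ⟨ha1, ha2⟩ := len_arith n σ P hI
  have hlt : (J0 n σ P hI : ℕ) < (J1 n σ P hI : ℕ) := J0_lt_J1 n σ P hI
  have hne : J0 n σ P hI ≠ J1 n σ P hI := ne_of_lt (J0_lt_J1 n σ P hI)
  have hdd : DD n σ P hI = 2 * ((J1 n σ P hI : ℕ) - (J0 n σ P hI : ℕ)) := rfl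
  have le1 : J0 n (SP n σ P hI) (PP n σ P hI) hI' ≤ J0 n σ P hI :=
    J0_min n (SP n σ P hI) (PP n σ P hI) hI' _
      ⟨J1 n σ P hI, hne, _, _, PP_meets n σ P hI⟩
  rcases eq_or_lt_of_le le1 with h | h
  · exact h
  exfalso
  obtain ⟨j'', hnej, i, i'', hr⟩ := J0_spec n (SP n σ P hI) (PP n σ P hI) hI'
  set j := J0 n (SP n σ P hI) (PP n σ P hI) hI' with hjdef
  have hjv : (j : ℕ) < (J0 n σ P hI : ℕ) := h
  have hj0 : j ≠ J0 n σ P hI := ne_of_lt h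
  have hj1 : j ≠ J1 n σ P hI := by
    intro e
    have : (j : ℕ) = (J1 n σ P hI : ℕ) := congrArg _ e
    omega
  obtain ⟨hbi, hbi'', hx, hv⟩ := hr
  rw [lenS_other n σ P hI j hj0 hj1] at hbi
  rw [PP_apply_other n σ P hI j hj0 hj1] at hv
  have hmeet : ∃ j2, Meets n σ P j j2 := by
    by_cases c0 : j'' = J0 n σ P hI
    · rw [c0] at hbi'' hx hv
      rw [PP_apply_j0] at hv
      by_cases cc : i'' ≤ T0 n σ P hI
      · rw [AA_val_le n σ P hI cc] at hv
        exact ⟨J0 n σ P hI, hj0, i, i'', hbi, by omega, hx, hv⟩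
      · rw [AA_val_gt n σ P hI (by omega)] at hv
        rw [lenS0 n σ P hI] at hbi''
        refine ⟨J1 n σ P hI, hj1, i, i'' + DD n σ P hI, hbi, ?_, ?_, hv⟩
        · have h4 : len n σ (J1 n σ P hI) =
            n + (J1 n σ P hI : ℕ) + (σ (J1 n σ P hI) : ℕ) := rfl
          omega
        · push_cast at hx ⊢
          omega
    · by_cases c1 : j'' = J1 n σ P hI
      · rw [c1] at hbi'' hx hv
        rw [PP_apply_j1] at hv
        by_cases cc : i'' ≤ T0 n σ P hI + DD n σ P hI
        · rw [BB_val_le n σ P hI cc] at hv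
          exact ⟨J1 n σ P hI, hj1, i, i'', hbi, by omega, hx, hv⟩
        · rw [BB_val_gt n σ P hI (by omega)] at hv
          rw [lenS1 n σ P hI] at hbi''
          refine ⟨J0 n σ P hI, hj0, i, i'' - DD n σ P hI, hbi, ?_, ?_, hv⟩
          · have h3 : len n σ (J0 n σ P hI) =
              n + (J0 n σ P hI : ℕ) + (σ (J0 n σ P hI) : ℕ) := rfl
            omega
          · have hdle : DD n σ P hI ≤ i'' := by omega
            push_cast [Nat.cast_sub hdle] at hx ⊢
            omega
      · rw [lenS_other n σ P hI j'' c0 c1] at hbi''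
        rw [PP_apply_other n σ P hI j'' c0 c1] at hv
        exact ⟨j'', hnej, i, i'', hbi, hbi'', hx, hv⟩
  exact absurd (J0_min n σ P hI j hmeet) (by omega)

lemma T0_PP (hP : ∀ j, P j ∈ DyckN (len n σ j)) (hI : Inter n σ P)
    (hI' : Inter n (SP n σ P hI) (PP n σ P hI))
    (hj0 : J0 n (SP n σ P hI) (PP n σ P hI) hI' = J0 n σ P hI) :
    T0 n (SP n σ P hI) (PP n σ P hI) hI' = T0 n σ P hI := by
  obtain ⟨hb0, hb1, heq⟩ := basics n σ P hI
  obtain ⟨ha1, ha2⟩ := len_arith n σ P hI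
  have hlt : (J0 n σ P hI : ℕ) < (J1 n σ P hI : ℕ) := J0_lt_J1 n σ P hI
  have hne : J0 n σ P hI ≠ J1 n σ P hI := ne_of_lt (J0_lt_J1 n σ P hI)
  have hdd : DD n σ P hI = 2 * ((J1 n σ P hI : ℕ) - (J0 n σ P hI : ℕ)) := rfl
  have le1 : T0 n (SP n σ P hI) (PP n σ P hI) hI' ≤ T0 n σ P hI := by
    refine T0_le n (SP n σ P hI) (PP n σ P hI) hI' (T0 n σ P hI)
      ⟨J1 n σ P hI, by rw [hj0]; exact hne.symm, T0 n σ P hI + DD n σ P hI, ?_⟩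
    rw [hj0]
    exact PP_meets n σ P hI
  rcases eq_or_lt_of_le le1 with h | h
  · exact h
  exfalso
  obtain ⟨j', hne', i', hr⟩ := T0_spec n (SP n σ P hI) (PP n σ P hI) hI'
  rw [hj0] at hne' hr
  set t := T0 n (SP n σ P hI) (PP n σ P hI) hI' with htdef
  obtain ⟨hbt, hbi', hx, hv⟩ := hr
  have hvt : PP n σ P hI (J0 n σ P hI) t = P (J0 n σ P hI) t := by
    rw [PP_apply_j0, AA_val_le n σ P hI (by omega)]
  rw [hvt] at hv
  have hq : ∃ j2, j2 ≠ J0 n σ P hI ∧ ∃ i2, R n σ P (J0 n σ P hI) j2 t i2 := by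
    by_cases c1 : j' = J1 n σ P hI
    · rw [c1] at hbi' hx hv
      have hi' : i' = t + DD n σ P hI := by push_cast at hx; omega
      rw [hi', PP_apply_j1, BB_val_le n σ P hI (by omega)] at hv
      refine ⟨J1 n σ P hI, hne.symm, t + DD n σ P hI, by omega, ?_, ?_, hv⟩
      · have h4 : len n σ (J1 n σ P hI) =
          n + (J1 n σ P hI : ℕ) + (σ (J1 n σ P hI) : ℕ) := rfl
        omega
      · push_cast
        omega
    · rw [lenS_other n σ P hI j' hne' c1] at hbi'
      rw [PP_apply_other n σ P hI j' hne' c1] at hv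
      exact ⟨j', hne', i', by omega, hbi', hx, hv⟩
  exact T0_min n σ P hI t h hq

lemma J1_PP (hP : ∀ j, P j ∈ DyckN (len n σ j)) (hI : Inter n σ P)
    (hI' : Inter n (SP n σ P hI) (PP n σ P hI))
    (hj0 : J0 n (SP n σ P hI) (PP n σ P hI) hI' = J0 n σ P hI)
    (ht0 : T0 n (SP n σ P hI) (PP n σ P hI) hI' = T0 n σ P hI) :
    J1 n (SP n σ P hI) (PP n σ P hI) hI' = J1 n σ P hI := by
  obtain ⟨hb0, hb1, heq⟩ := basics n σ P hI
  have hne : J0 n σ P hI ≠ J1 n σ P hI := ne_of_lt (J0_lt_J1 n σ P hI)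
  have le1 : J1 n (SP n σ P hI) (PP n σ P hI) hI' ≤ J1 n σ P hI := by
    refine J1_min n (SP n σ P hI) (PP n σ P hI) hI' (J1 n σ P hI)
      (by rw [hj0]; exact hne.symm) ⟨T0 n σ P hI + DD n σ P hI, ?_⟩
    rw [hj0, ht0]
    exact PP_meets n σ P hI
  obtain ⟨hne', i', hr⟩ := J1_spec n (SP n σ P hI) (PP n σ P hI) hI'
  rw [hj0] at hne'
  rw [hj0, ht0] at hr
  set j' := J1 n (SP n σ P hI) (PP n σ P hI) hI' with hjdef
  by_cases c1 : j' = J1 n σ P hI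
  · exact c1
  exfalso
  obtain ⟨hbt, hbi', hx, hv⟩ := hr
  rw [PP_apply_j0, AA_val_le n σ P hI (le_refl _)] at hv
  rw [lenS_other n σ P hI j' hne' c1] at hbi'
  rw [PP_apply_other n σ P hI j' hne' c1] at hv
  have le2 : J1 n σ P hI ≤ j' :=
    J1_min n σ P hI j' hne' ⟨i', hb0, hbi', hx, hv⟩
  have : (J1 n σ P hI : ℕ) = (j' : ℕ) := by
    have l1 : (j' : ℕ) ≤ (J1 n σ P hI : ℕ) := le1
    have l2 : (J1 n σ P hI : ℕ) ≤ (j' : ℕ) := le2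
    omega
  exact c1 (Fin.ext this.symm)

lemma SP_SP (hI : Inter n σ P) (hI' : Inter n (SP n σ P hI) (PP n σ P hI))
    (hj0 : J0 n (SP n σ P hI) (PP n σ P hI) hI' = J0 n σ P hI)
    (hj1 : J1 n (SP n σ P hI) (PP n σ P hI) hI' = J1 n σ P hI) :
    SP n (SP n σ P hI) (PP n σ P hI) hI' = σ := by
  have e : SP n (SP n σ P hI) (PP n σ P hI) hI' = (SP n σ P hI) *
      Equiv.swap (J0 n (SP n σ P hI) (PP n σ P hI) hI')
        (J1 n (SP n σ P hI) (PP n σ P hI) hI') := rfl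
  rw [e, hj0, hj1]
  have e2 : SP n σ P hI = σ * Equiv.swap (J0 n σ P hI) (J1 n σ P hI) := rfl
  rw [e2, mul_assoc, Equiv.swap_mul_self, mul_one]

lemma PP_PP (hI : Inter n σ P) (hI' : Inter n (SP n σ P hI) (PP n σ P hI))
    (hj0 : J0 n (SP n σ P hI) (PP n σ P hI) hI' = J0 n σ P hI)
    (ht0 : T0 n (SP n σ P hI) (PP n σ P hI) hI' = T0 n σ P hI)
    (hj1 : J1 n (SP n σ P hI) (PP n σ P hI) hI' = J1 n σ P hI) :
    PP n (SP n σ P hI) (PP n σ P hI) hI' = P := by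
  have hdd' : DD n (SP n σ P hI) (PP n σ P hI) hI' = DD n σ P hI := by
    unfold DD
    rw [hj0, hj1]
  funext j t
  by_cases c0 : j = J0 n σ P hI
  · rw [c0]
    have e1 : PP n (SP n σ P hI) (PP n σ P hI) hI' (J0 n σ P hI) =
        AA n (SP n σ P hI) (PP n σ P hI) hI' := by
      rw [← hj0]
      exact PP_apply_j0 n (SP n σ P hI) (PP n σ P hI) hI'
    rw [e1]
    by_cases ct : t ≤ T0 n σ P hI
    · rw [AA_val_le n (SP n σ P hI) (PP n σ P hI) hI' (by rw [ht0]; exact ct),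
        hj0, PP_apply_j0, AA_val_le n σ P hI ct]
    · rw [AA_val_gt n (SP n σ P hI) (PP n σ P hI) hI' (by rw [ht0]; omega),
        hj1, hdd', PP_apply_j1, BB_val_gt n σ P hI (by omega), Nat.add_sub_cancel]
  · by_cases c1 : j = J1 n σ P hI
    · rw [c1]
      have e1 : PP n (SP n σ P hI) (PP n σ P hI) hI' (J1 n σ P hI) =
          BB n (SP n σ P hI) (PP n σ P hI) hI' := by
        rw [← hj1]
        exact PP_apply_j1 n (SP n σ P hI) (PP n σ P hI) hI'
      rw [e1]
      by_cases ct : t ≤ T0 n σ P hI + DD n σ P hI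
      · rw [BB_val_le n (SP n σ P hI) (PP n σ P hI) hI' (by rw [ht0, hdd']; exact ct),
          hj1, PP_apply_j1, BB_val_le n σ P hI ct]
      · rw [BB_val_gt n (SP n σ P hI) (PP n σ P hI) hI' (by rw [ht0, hdd']; omega),
          hj0, hdd', PP_apply_j0, AA_val_gt n σ P hI (by omega),
          Nat.sub_add_cancel (by omega)]
    · rw [PP_apply_other n (SP n σ P hI) (PP n σ P hI) hI' j
        (by rw [hj0]; exact c0) (by rw [hj1]; exact c1),
        PP_apply_other n σ P hI j c0 c1]

end Involution3

end LGV

namespace LGV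
open Finset Equiv Classical

variable {k : ℕ}

lemma aset_finite (k n : ℕ) : (Aset k n).Finite := by
  have hsub : Aset k n ⊆ Set.pi Set.univ (fun j : Fin k => DyckN (n + 2*(j:ℕ))) :=
    fun P hP j _ => hP.1 j
  exact (Set.Finite.pi (fun j => dyck_finite _)).subset hsub

noncomputable def TF (n : ℕ) (σ : Perm (Fin k)) : Finset (Fin k → ℕ → ℕ) :=
  Fintype.piFinset (fun j => DF (len n σ j))

lemma mem_TF {n : ℕ} {σ : Perm (Fin k)} {P : Fin k → ℕ → ℕ} :
    P ∈ TF n σ ↔ ∀ j, P j ∈ DyckN (len n σ j) := by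
  simp [TF, Fintype.mem_piFinset, mem_DF]

open Classical in
/-- the intersecting configurations cancel in pairs -/
lemma inter_sum_zero (n : ℕ) (w : ℕ → ℝ) :
    ∑ x ∈ (univ : Finset (Perm (Fin k))).sigma
        (fun σ => (TF n σ).filter (fun P => Inter n σ P)),
      ((Equiv.Perm.sign x.1 : ℤ) : ℝ) * ∏ j, fw w (len n x.1 j) (x.2 j) = 0 := by
  have hIof : ∀ x : (Σ _ : Perm (Fin k), Fin k → ℕ → ℕ),
      x ∈ (univ : Finset (Perm (Fin k))).sigma
        (fun σ => (TF n σ).filter (fun P => Inter n σ P)) → Inter n x.1 x.2 := by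
    intro x hx
    simp only [Finset.mem_sigma, Finset.mem_filter] at hx
    exact hx.2.2
  have hPof : ∀ x : (Σ _ : Perm (Fin k), Fin k → ℕ → ℕ),
      x ∈ (univ : Finset (Perm (Fin k))).sigma
        (fun σ => (TF n σ).filter (fun P => Inter n σ P)) →
        ∀ j, x.2 j ∈ DyckN (len n x.1 j) := by
    intro x hx
    simp only [Finset.mem_sigma, Finset.mem_filter] at hx
    exact mem_TF.1 hx.2.1
  refine Finset.sum_involution
    (fun x hx => ⟨SP n x.1 x.2 (hIof x hx), PP n x.1 x.2 (hIof x hx)⟩) ?_ ?_ ?_ ?_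
  · intro x hx
    have hI := hIof x hx
    have hsign : Equiv.Perm.sign (SP n x.1 x.2 hI) = - Equiv.Perm.sign x.1 := by
      have e : SP n x.1 x.2 hI = x.1 * Equiv.swap (J0 n x.1 x.2 hI) (J1 n x.1 x.2 hI) := rfl
      rw [e, Equiv.Perm.sign_mul,
        Equiv.Perm.sign_swap (ne_of_lt (J0_lt_J1 n x.1 x.2 hI)), mul_neg_one]
    have hprod := PP_fw n x.1 x.2 w hI
    show ((Equiv.Perm.sign x.1 : ℤ) : ℝ) * _ +
      ((Equiv.Perm.sign (SP n x.1 x.2 hI) : ℤ) : ℝ) * _ = 0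
    rw [hsign, hprod]
    push_cast
    ring
  · intro x hx _
    intro hcon
    have h1 : SP n x.1 x.2 (hIof x hx) = x.1 := congrArg Sigma.fst hcon
    have h2 : x.1 * Equiv.swap (J0 n x.1 x.2 (hIof x hx)) (J1 n x.1 x.2 (hIof x hx)) =
        x.1 * 1 := by
      rw [mul_one]; exact h1
    have h3 := mul_left_cancel h2
    rw [Equiv.swap_eq_one_iff] at h3
    exact absurd h3 (ne_of_lt (J0_lt_J1 n x.1 x.2 (hIof x hx)))
  · intro x hx
    have hI := hIof x hx
    simp only [Finset.mem_sigma, Finset.mem_filter]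
    exact ⟨mem_univ _, mem_TF.2 (PP_mem n x.1 x.2 (hPof x hx) hI), PP_inter n x.1 x.2 hI⟩
  · intro x hx
    have hI := hIof x hx
    have hP := hPof x hx
    have hI' : Inter n (SP n x.1 x.2 hI) (PP n x.1 x.2 hI) := PP_inter n x.1 x.2 hI
    have hj0 := J0_PP n x.1 x.2 hP hI hI'
    have ht0 := T0_PP n x.1 x.2 hP hI hI' hj0
    have hj1 := J1_PP n x.1 x.2 hP hI hI' hj0 ht0
    have e1 := SP_SP n x.1 x.2 hI hI' hj0 hj1
    have e2 := PP_PP n x.1 x.2 hI hI' hj0 ht0 hj1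
    show (⟨SP n (SP n x.1 x.2 hI) (PP n x.1 x.2 hI) hI',
      PP n (SP n x.1 x.2 hI) (PP n x.1 x.2 hI) hI'⟩ :
        Σ _ : Perm (Fin k), Fin k → ℕ → ℕ) = x
    rw [Sigma.ext_iff]
    exact ⟨e1, heq_of_eq e2⟩

lemma len_one (n : ℕ) (j : Fin k) : len n (1 : Perm (Fin k)) j = n + 2*(j:ℕ) := by
  unfold len
  simp only [Equiv.Perm.one_apply]
  omega

open Classical in
lemma filter_one_eq (n : ℕ) :
    (TF n (1 : Perm (Fin k))).filter (fun P => ¬ Inter n 1 P) =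
      (aset_finite k n).toFinset := by
  ext P
  simp only [Finset.mem_filter, mem_TF, Set.Finite.mem_toFinset]
  constructor
  · rintro ⟨h1, h2⟩
    refine ⟨fun j => by rw [← len_one n j]; exact h1 j, ?_⟩
    intro j j' hne i i' hi hi' hx hval
    exact h2 ⟨j, j', hne, i, i', by rw [len_one]; exact hi, by rw [len_one]; exact hi',
      hx, hval⟩
  · rintro ⟨h1, h2⟩
    refine ⟨fun j => by rw [len_one n j]; exact h1 j, ?_⟩
    rintro ⟨j, j', hne, i, i', hi, hi', hx, hval⟩
    rw [len_one] at hi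
    rw [len_one] at hi'
    exact h2 j j' hne i i' hi hi' hx hval

open Classical in
lemma filter_ne_one_empty (n : ℕ) {σ : Perm (Fin k)} (hσ : σ ≠ 1) :
    (TF n σ).filter (fun P => ¬ Inter n σ P) = ∅ := by
  rw [Finset.eq_empty_iff_forall_notMem]
  intro P hP
  rw [Finset.mem_filter] at hP
  obtain ⟨j, j', hjj, hinv⟩ := exists_inversion hσ
  exact hP.2 ⟨j, j', crossing (mem_TF.1 hP.1) hjj hinv⟩

end LGV


open Finset Equiv LGV in
/-- If `a n = a 0 * Σ_{h ∈ D_n} f_w(h)` for all `n`, then the Hankel-type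
determinant `det (a (n+i+j))` equals `a 0 ^ k` times the weighted sum over the
`k`-tuples of non-intersecting Dyck paths in `A_n`
(Lindström–Gessel–Viennot). -/
theorem stmt12 (k : ℕ) (hk : 1 ≤ k) (a : ℕ → ℝ) (w : ℕ → ℝ)
    (ha : ∀ n : ℕ, a n = a 0 * ∑ᶠ h ∈ DyckN n, fw w n h) :
    ∀ n : ℕ,
      Matrix.det (Matrix.of fun i j : Fin k => a (n + (i : ℕ) + (j : ℕ)))
        = a 0 ^ k * ∑ᶠ P ∈ Aset k n, ∏ j : Fin k, fw w (n + 2 * (j : ℕ)) (P j) := by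
  intro n
  classical
  have hS : ∀ m : ℕ, a m = a 0 * ∑ h ∈ DF m, fw w m h := by
    intro m
    rw [ha m, ← (dyck_finite m).coe_toFinset, finsum_mem_coe_finset]
    rfl
  rw [Matrix.det_apply']
  have hterm : ∀ σ : Perm (Fin k),
      ((Equiv.Perm.sign σ : ℤ) : ℝ) *
        ∏ i, (Matrix.of fun i j : Fin k => a (n + (i : ℕ) + (j : ℕ))) (σ i) i
      = a 0 ^ k * (((Equiv.Perm.sign σ : ℤ) : ℝ) *
          ∑ P ∈ TF n σ, ∏ j, fw w (len n σ j) (P j)) := by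
    intro σ
    have e1 : ∀ i : Fin k, (Matrix.of fun i j : Fin k => a (n + (i : ℕ) + (j : ℕ))) (σ i) i
        = a 0 * ∑ h ∈ DF (len n σ i), fw w (len n σ i) h := by
      intro i
      show a (n + ((σ i : Fin k) : ℕ) + (i : ℕ)) = _
      rw [show n + ((σ i : Fin k) : ℕ) + (i : ℕ) = len n σ i from by unfold LGV.len; omega]
      exact hS _
    rw [Finset.prod_congr rfl (fun i _ => e1 i), Finset.prod_mul_distrib,
      Finset.prod_const, Finset.card_univ, Fintype.card_fin, Finset.prod_univ_sum]
    have e2 : (Fintype.piFinset (fun j => DF (len n σ j))) = TF n σ := rfl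
    rw [e2]
    ring
  rw [Finset.sum_congr rfl (fun σ _ => hterm σ), ← Finset.mul_sum]
  rw [← (aset_finite k n).coe_toFinset, finsum_mem_coe_finset]
  congr 1
  have hsplit : ∀ σ : Perm (Fin k),
      (∑ P ∈ TF n σ, ∏ j, fw w (len n σ j) (P j))
      = (∑ P ∈ (TF n σ).filter (fun P => Inter n σ P), ∏ j, fw w (len n σ j) (P j))
      + ∑ P ∈ (TF n σ).filter (fun P => ¬ Inter n σ P), ∏ j, fw w (len n σ j) (P j) :=
    fun σ => (Finset.sum_filter_add_sum_filter_not _ _ _).symm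
  rw [Finset.sum_congr rfl (fun σ _ => by rw [hsplit σ, mul_add]), Finset.sum_add_distrib]
  have hzero : ∑ σ : Perm (Fin k), ((Equiv.Perm.sign σ : ℤ) : ℝ) *
      ∑ P ∈ (TF n σ).filter (fun P => Inter n σ P), ∏ j, fw w (len n σ j) (P j) = 0 := by
    have hz := inter_sum_zero (k := k) n w
    rw [Finset.sum_sigma] at hz
    rw [Finset.sum_congr rfl (fun σ _ => Finset.mul_sum _ _ _)]
    exact hz
  rw [hzero, zero_add]
  rw [Finset.sum_eq_single (1 : Perm (Fin k))]
  · rw [Equiv.Perm.sign_one, filter_one_eq]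
    push_cast
    rw [one_mul]
    refine Finset.sum_congr rfl fun P _ => Finset.prod_congr rfl fun j _ => ?_
    rw [len_one]
  · intro σ _ hσ
    rw [filter_ne_one_empty n hσ, Finset.sum_empty, mul_zero]
  · intro h
    exact absurd (Finset.mem_univ _) h
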